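/- In the symmetric group S_3, let a = (12) and b = (132) and let e be the identity. For d ≥ 1 let b_d be the number of words of length d over {e, a, b} that reduce to the identity and do not cross the identity, with b_0 = 0. Then in ℚ⟦q⟧ one has (Σ_{d≥1} b_d q^d)·(1 − 3q + q²) = q·(1 − 2q); that is, the generating series of these words is q(1 − 2q)/(1 − 3q + q²), the generating series of the odd-indexed Fibonacci numbers. -/

import Mathlib

set_option maxRecDepth 100000

private abbrev S3G := Equiv.Perm (Fin 3)
private abbrev Sgen : Finset S3G := {1, Equiv.swap 0 1, Equiv.swap 0 1 * Equiv.swap 0 2}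
private abbrev SgenT := {x // x ∈ Sgen}

private def Pw (d : ℕ) (w : Fin d → SgenT) (g : S3G) : Prop :=
  (List.ofFn fun i => (w i : S3G)).prod = g ∧
    ∀ j < d, 0 < j → ((List.ofFn fun i => (w i : S3G)).take j).prod ≠ 1

private instance (d : ℕ) (g : S3G) : DecidablePred (Pw d · g) := fun _ => by
  unfold Pw; infer_instance

private def cnt (d : ℕ) (g : S3G) : ℕ := Fintype.card {w : Fin d → SgenT // Pw d w g}

private def Dnt (d : ℕ) (g : S3G) : ℕ :=
  Fintype.card {w : Fin d → SgenT // Pw d w g ∧ g ≠ 1}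

private lemma Dnt_one (d : ℕ) : Dnt d 1 = 0 :=
  Fintype.card_eq_zero_iff.mpr ⟨fun x => x.2.2 rfl⟩

private lemma Dnt_ne (d : ℕ) {g : S3G} (h : g ≠ 1) : Dnt d g = cnt d g :=
  Fintype.card_congr (Equiv.subtypeEquivRight fun _ => and_iff_left h)

private lemma key (d : ℕ) (hd : 0 < d) (g : S3G) (s : SgenT) (v : Fin d → SgenT) :
    Pw (d + 1) (Fin.snoc v s) g ↔
      (Pw d v (g * (s : S3G)⁻¹) ∧ g * (s : S3G)⁻¹ ≠ 1) := by
  have hlist : (List.ofFn fun i => ((Fin.snoc v s : Fin (d + 1) → SgenT) i : S3G)) =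
      (List.ofFn fun i => (v i : S3G)) ++ [(s : S3G)] := by
    rw [List.ofFn_succ']
    simp [List.concat_eq_append]
  unfold Pw
  rw [hlist]
  set l := List.ofFn fun i => (v i : S3G) with hl
  have hlen : l.length = d := List.length_ofFn
  have htake : ∀ j, j ≤ d → (l ++ [(s : S3G)]).take j = l.take j := fun j hj =>
    List.take_append_of_le_length (by omega)
  have htaked : l.take d = l := by rw [← hlen]; exact List.take_length
  have hprodapp : (l ++ [(s : S3G)]).prod = l.prod * (s : S3G) := by simp
  constructor
  · rintro ⟨hp, hQ⟩
    rw [hprodapp] at hp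
    have hps : l.prod = g * (s : S3G)⁻¹ := by rw [← hp]; group
    refine ⟨⟨hps, fun j hj hj0 => ?_⟩, ?_⟩
    · have := hQ j (by omega) hj0
      rwa [htake j (le_of_lt hj)] at this
    · have := hQ d (by omega) hd
      rwa [htake d le_rfl, htaked, hps] at this
  · rintro ⟨⟨hps, hQ⟩, hne⟩
    constructor
    · rw [hprodapp, hps]; group
    · intro j hj hj0
      rcases lt_or_eq_of_le (Nat.lt_succ_iff.mp hj) with h | h
      · rw [htake j (le_of_lt h)]; exact hQ j h hj0
      · subst h
        rw [htake j le_rfl, htaked, hps]; exact hne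

private lemma peel (d : ℕ) (hd : 0 < d) (g : S3G) :
    cnt (d + 1) g = ∑ s ∈ Sgen, Dnt d (g * s⁻¹) := by
  have e1 : {w : Fin (d + 1) → SgenT // Pw (d + 1) w g} ≃
      Σ s : SgenT, {v : Fin d → SgenT //
        Pw d v (g * (s : S3G)⁻¹) ∧ g * (s : S3G)⁻¹ ≠ 1} :=
    (Equiv.subtypeEquiv (Fin.snocEquiv (fun _ => SgenT)).symm (fun w => by
        conv_lhs => rw [← Fin.snoc_init_self w]
        exact key d hd g (w (Fin.last d)) (Fin.init w))).trans
      (Equiv.subtypeProdEquivSigmaSubtype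
        (fun (s : SgenT) (v : Fin d → SgenT) =>
          Pw d v (g * (s : S3G)⁻¹) ∧ g * (s : S3G)⁻¹ ≠ 1))
  calc cnt (d + 1) g
      = Fintype.card (Σ s : SgenT, {v : Fin d → SgenT //
          Pw d v (g * (s : S3G)⁻¹) ∧ g * (s : S3G)⁻¹ ≠ 1}) := Fintype.card_congr e1
    _ = ∑ s : SgenT, Dnt d (g * (s : S3G)⁻¹) := by
        rw [Fintype.card_sigma]
        exact Finset.sum_congr rfl fun s _ => Fintype.card_congr (Equiv.refl _)
    _ = ∑ s ∈ Sgen, Dnt d (g * s⁻¹) :=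
        Finset.sum_coe_sort Sgen (fun s => Dnt d (g * s⁻¹))

private lemma peel' (d : ℕ) (hd : 0 < d) (g : S3G) :
    cnt (d + 1) g = Dnt d g + (Dnt d (g * (Equiv.swap 0 1)⁻¹) +
      Dnt d (g * (Equiv.swap 0 1 * Equiv.swap 0 2)⁻¹)) := by
  rw [peel d hd g]
  rw [show Sgen = insert 1 (insert (Equiv.swap 0 1)
      ({Equiv.swap 0 1 * Equiv.swap 0 2} : Finset S3G)) from rfl]
  rw [Finset.sum_insert (by decide), Finset.sum_insert (by decide),
    Finset.sum_singleton, inv_one, mul_one]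

private lemma Dnt_rec (d : ℕ)
    (hIH : ∀ g : S3G, cnt (d + 2) g + cnt d g = 3 * cnt (d + 1) g) (h : S3G) :
    Dnt (d + 2) h + Dnt d h = 3 * Dnt (d + 1) h := by
  by_cases hh : h = 1
  · subst hh; simp [Dnt_one]
  · rw [Dnt_ne _ hh, Dnt_ne _ hh, Dnt_ne _ hh]; exact hIH h

private lemma cnt_rec : ∀ d, 1 ≤ d → ∀ g : S3G,
    cnt (d + 2) g + cnt d g = 3 * cnt (d + 1) g := by
  intro d hd
  induction d, hd using Nat.le_induction with
  | base => decide
  | succ d hd IH =>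
    intro g
    have e1 := peel' (d + 2) (by omega) g
    have e2 := peel' (d + 1) (by omega) g
    have e3 := peel' d hd g
    have r1 := Dnt_rec d IH g
    have r2 := Dnt_rec d IH (g * (Equiv.swap 0 1)⁻¹)
    have r3 := Dnt_rec d IH (g * (Equiv.swap 0 1 * Equiv.swap 0 2)⁻¹)
    show cnt (d + 2 + 1) g + cnt (d + 1) g = 3 * cnt (d + 1 + 1) g
    omega



/-- **Free generators of `T(ℂ³)^{S_3}` are counted by odd Fibonacci numbers.**
In `S_3`, let `a = (12)`, `b = (132)` (0-based: `a = (0 1)`, `b = (0 1)·(0 2)`) and let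
`e` be the identity. For `d ≥ 1`, let `b' d` be the number of words of length `d` over
`{e, a, b}` which reduce to the identity without crossing the identity (`b' 0 = 0`).
Then `(Σ_{d≥1} b'_d q^d)·(1 − 3q + q²) = q(1 − 2q)` in `ℚ⟦q⟧`, i.e. the generating
series of these words is `q(1 − 2q)/(1 − 3q + q²)`, the generating series of the
odd-indexed Fibonacci numbers. -/
theorem S3_noncross_words_odd_fibonacci
    (b' : ℕ → ℕ)
    (hb0 : b' 0 = 0)
    (hb : ∀ d, 0 < d → b' d =
      Nat.card {w : Fin d → {x // x ∈
          ({1, Equiv.swap 0 1, Equiv.swap 0 1 * Equiv.swap 0 2} :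
            Finset (Equiv.Perm (Fin 3)))} //
        (List.ofFn fun i => (w i : Equiv.Perm (Fin 3))).prod = 1 ∧
        ∀ j : ℕ, 0 < j → j < d →
          ((List.ofFn fun i => (w i : Equiv.Perm (Fin 3))).take j).prod ≠ 1}) :
    (PowerSeries.mk fun d => (b' d : ℚ)) *
        (1 - 3 * PowerSeries.X + (PowerSeries.X : PowerSeries ℚ) ^ 2) =
      PowerSeries.X * (1 - 2 * (PowerSeries.X : PowerSeries ℚ)) := by
  have hbc : ∀ d, 0 < d → b' d = cnt d 1 := by
    intro d hd
    rw [hb d hd,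
      Nat.card_congr (Equiv.subtypeEquivRight (q := fun w : Fin d → SgenT => Pw d w 1)
        fun w => ⟨fun ⟨h1, h2⟩ => ⟨h1, fun j hj hj0 => h2 j hj0 hj⟩,
          fun ⟨h1, h2⟩ => ⟨h1, fun j hj0 hj => h2 j hj hj0⟩⟩),
      Nat.card_eq_fintype_card]
    rfl
  have h1 : b' 1 = 1 := by rw [hbc 1 one_pos]; decide
  have h2 : b' 2 = 1 := by rw [hbc 2 (by norm_num)]; decide
  have hrec : ∀ n, 1 ≤ n → b' (n + 2) + b' n = 3 * b' (n + 1) := by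
    intro n hn
    rw [hbc (n + 2) (by omega), hbc n (by omega), hbc (n + 1) (by omega)]
    exact cnt_rec n hn 1
  have main : (PowerSeries.mk fun d => (b' d : ℚ)) +
      (PowerSeries.mk fun d => (b' d : ℚ)) * PowerSeries.X ^ 2 +
      PowerSeries.C (R := ℚ) 2 * PowerSeries.X ^ 2 =
      PowerSeries.X + PowerSeries.C (R := ℚ) 3 *
        ((PowerSeries.mk fun d => (b' d : ℚ)) * PowerSeries.X ^ 1) := by
    ext n
    simp only [map_add, PowerSeries.coeff_C_mul, PowerSeries.coeff_mk,
      PowerSeries.coeff_X, PowerSeries.coeff_mul_X_pow', PowerSeries.coeff_X_pow, PowerSeries.coeff_C]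
    rcases n with _ | n
    · norm_num [hb0]
    · rcases n with _ | n
      · norm_num [h1, hb0]
      · rcases n with _ | n
        · norm_num [h2, hb0, h1]
        · have := hrec (n + 1) (by omega)
          have hcast : ((b' (n + 3) : ℚ)) + b' (n + 1) = 3 * b' (n + 2) := by
            exact_mod_cast congrArg (fun k : ℕ => (k : ℚ)) this
          norm_num
          push_cast
          linarith
  have c2 : PowerSeries.C (R := ℚ) 2 = (2 : PowerSeries ℚ) := map_ofNat _ 2
  have c3 : PowerSeries.C (R := ℚ) 3 = (3 : PowerSeries ℚ) := map_ofNat _ 3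
  rw [c2, c3] at main
  linear_combination main
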